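/- Fix β > 0. There exists C > 0 such that the following holds. Let z, w ∈ ℝ², r > 0 with |z−w| ≥ 4r, and let x, y ∈ Q(z,r) and u, v ∈ Q(w,r), where Q(p,r) = p + [−r,r]². Then the cross-ratio quantity 𝐫 := (|x−u|^{β²} |y−v|^{β²})/(|x−v|^{β²} |y−u|^{β²}) satisfies |𝐫 − 1| ≤ C β² r² / |z−w|². -/

import Mathlib

/-- The axis-parallel square `Q(p,r) = p + [-r,r]²` in `ℝ²`. -/
def sqQ (p : EuclideanSpace ℝ (Fin 2)) (r : ℝ) : Set (EuclideanSpace ℝ (Fin 2)) :=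
  {q | ∀ i, |q i - p i| ≤ r}

private lemma sqQ_dist {p q : EuclideanSpace ℝ (Fin 2)} {r : ℝ} (hr : 0 ≤ r)
    (h : q ∈ sqQ p r) : dist q p ≤ 3 / 2 * r := by
  have h2 : dist q p ≤ Real.sqrt (2 * r ^ 2) := by
    rw [EuclideanSpace.dist_eq]
    apply Real.sqrt_le_sqrt
    rw [Fin.sum_univ_two]
    have h0 := h 0; have h1 := h 1
    rw [Real.dist_eq, Real.dist_eq]
    nlinarith [abs_nonneg (q 0 - p 0), abs_nonneg (q 1 - p 1)]
  have h3 : Real.sqrt (2 * r ^ 2) ≤ 3 / 2 * r := by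
    rw [show 3 / 2 * r = Real.sqrt ((3 / 2 * r) ^ 2) from
      (Real.sqrt_sq (by linarith)).symm]
    apply Real.sqrt_le_sqrt; nlinarith
  linarith

private lemma rpow_est {p : ℝ} (hp : 0 < p) {t : ℝ} (h1 : 1 / 64 ≤ t) (h2 : t ≤ 64) :
    |t ^ p - 1| ≤ p * (64 : ℝ) ^ |p - 1| * |t - 1| := by
  have h64 : (0 : ℝ) < 64 := by norm_num
  have hd : ∀ x ∈ Set.Icc (1 / 64 : ℝ) 64,
      HasDerivWithinAt (fun y : ℝ => y ^ p) ((fun x : ℝ => p * x ^ (p - 1)) x)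
        (Set.Icc (1 / 64 : ℝ) 64) x := by
    intro x hx
    have hx0 : (0 : ℝ) < x := lt_of_lt_of_le (by norm_num) hx.1
    exact (Real.hasDerivAt_rpow_const (Or.inl hx0.ne')).hasDerivWithinAt
  have hK : ∀ x ∈ Set.Icc (1 / 64 : ℝ) 64,
      ‖(fun x : ℝ => p * x ^ (p - 1)) x‖ ≤ p * (64 : ℝ) ^ |p - 1| := by
    intro x hx
    have hx0 : (0 : ℝ) < x := lt_of_lt_of_le (by norm_num) hx.1
    have hb : x ^ (p - 1) ≤ (64 : ℝ) ^ |p - 1| := by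
      rw [Real.rpow_def_of_pos hx0, Real.rpow_def_of_pos h64]
      apply Real.exp_le_exp.mpr
      have hlog : |Real.log x| ≤ Real.log 64 := by
        rw [abs_le]
        constructor
        · have h' : Real.log (1 / 64 : ℝ) ≤ Real.log x :=
            Real.log_le_log (by norm_num) hx.1
          rw [Real.log_div one_ne_zero (by norm_num), Real.log_one] at h'
          linarith
        · exact Real.log_le_log hx0 hx.2
      calc Real.log x * (p - 1) ≤ |Real.log x * (p - 1)| := le_abs_self _
        _ = |Real.log x| * |p - 1| := abs_mul _ _
        _ ≤ Real.log 64 * |p - 1| := by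
            exact mul_le_mul_of_nonneg_right hlog (abs_nonneg _)
    simp only [Real.norm_eq_abs]
    rw [abs_mul, abs_of_pos hp, abs_of_pos (Real.rpow_pos_of_pos hx0 _)]
    exact mul_le_mul_of_nonneg_left hb hp.le
  have hmem1 : (1 : ℝ) ∈ Set.Icc (1 / 64 : ℝ) 64 := by constructor <;> norm_num
  have hmemt : t ∈ Set.Icc (1 / 64 : ℝ) 64 := ⟨h1, h2⟩
  have := (convex_Icc (1 / 64 : ℝ) 64).norm_image_sub_le_of_norm_hasDerivWithin_le
    hd hK hmem1 hmemt
  simpa [Real.one_rpow, Real.norm_eq_abs] using this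

private lemma sq_sub_sq_inner {E : Type*} [NormedAddCommGroup E] [InnerProductSpace ℝ E]
    (A B : E) : ‖A‖ ^ 2 - ‖B‖ ^ 2 = (inner ℝ (A + B) (A - B) : ℝ) := by
  rw [inner_add_left, inner_sub_right, inner_sub_right, real_inner_self_eq_norm_sq,
    real_inner_self_eq_norm_sq, real_inner_comm B A]
  ring

set_option maxHeartbeats 2000000 in
/-- Cross-ratio estimate: if `|z-w| ≥ 4r` and `x,y ∈ Q(z,r)`, `u,v ∈ Q(w,r)`, then
`|𝐫 - 1| ≤ C β² r² / |z-w|²`. -/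
theorem cross_ratio_estimate (β : ℝ) (hβ : 0 < β) :
    ∃ C : ℝ, 0 < C ∧
      ∀ z w : EuclideanSpace ℝ (Fin 2), ∀ r : ℝ, 0 < r → 4 * r ≤ dist z w →
      ∀ x ∈ sqQ z r, ∀ y ∈ sqQ z r, ∀ u ∈ sqQ w r, ∀ v ∈ sqQ w r,
        |(dist x u ^ (β ^ 2) * dist y v ^ (β ^ 2)) /
            (dist x v ^ (β ^ 2) * dist y u ^ (β ^ 2)) - 1| ≤
          C * β ^ 2 * r ^ 2 / dist z w ^ 2 := by
  refine ⟨27648 * (64 : ℝ) ^ |β ^ 2 - 1|, by positivity, ?_⟩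
  intro z w r hr hr4 x hx y hy u hu v hv
  set D := dist z w with hD_def
  have hD : 0 < D := lt_of_lt_of_le (by linarith) hr4
  have hxz : dist x z ≤ 3 / 2 * r := sqQ_dist hr.le hx
  have hyz : dist y z ≤ 3 / 2 * r := sqQ_dist hr.le hy
  have huw : dist u w ≤ 3 / 2 * r := sqQ_dist hr.le hu
  have hvw : dist v w ≤ 3 / 2 * r := sqQ_dist hr.le hv
  set a := dist x u with ha_def
  set b := dist y v with hb_def
  set a' := dist x v with ha'_def
  set b' := dist y u with hb'_def
  -- lower bounds
  have ha1 : D / 4 ≤ a := by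
    have h1 : D ≤ dist z x + dist x u + dist u w := dist_triangle4 z x u w
    rw [dist_comm z x] at h1
    linarith
  have hb1 : D / 4 ≤ b := by
    have h1 : D ≤ dist z y + dist y v + dist v w := dist_triangle4 z y v w
    rw [dist_comm z y] at h1
    linarith
  have ha'1 : D / 4 ≤ a' := by
    have h1 : D ≤ dist z x + dist x v + dist v w := dist_triangle4 z x v w
    rw [dist_comm z x] at h1
    linarith
  have hb'1 : D / 4 ≤ b' := by
    have h1 : D ≤ dist z y + dist y u + dist u w := dist_triangle4 z y u w
    rw [dist_comm z y] at h1
    linarith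
  -- upper bounds
  have ha2 : a ≤ 2 * D := by
    have h1 : dist x u ≤ dist x z + dist z w + dist w u := dist_triangle4 x z w u
    rw [dist_comm w u] at h1
    linarith
  have hb2 : b ≤ 2 * D := by
    have h1 : dist y v ≤ dist y z + dist z w + dist w v := dist_triangle4 y z w v
    rw [dist_comm w v] at h1
    linarith
  have ha'2 : a' ≤ 2 * D := by
    have h1 : dist x v ≤ dist x z + dist z w + dist w v := dist_triangle4 x z w v
    rw [dist_comm w v] at h1
    linarith
  have hb'2 : b' ≤ 2 * D := by
    have h1 : dist y u ≤ dist y z + dist z w + dist w u := dist_triangle4 y z w u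
    rw [dist_comm w u] at h1
    linarith
  have ha0 : 0 < a := lt_of_lt_of_le (by positivity) ha1
  have hb0 : 0 < b := lt_of_lt_of_le (by positivity) hb1
  have ha'0 : 0 < a' := lt_of_lt_of_le (by positivity) ha'1
  have hb'0 : 0 < b' := lt_of_lt_of_le (by positivity) hb'1
  -- difference bounds
  have hxy : dist x y ≤ 3 * r := by
    have := dist_triangle x z y
    rw [dist_comm z y] at this
    linarith
  have hvu : dist v u ≤ 3 * r := by
    have := dist_triangle v w u
    rw [dist_comm w u] at this
    linarith
  have hd1 : |a - a'| ≤ 3 * r := by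
    have h1 := abs_dist_sub_le u v x
    rw [dist_comm u x, dist_comm v x] at h1
    have h2 : dist u v ≤ 3 * r := by rw [dist_comm u v]; exact hvu
    calc |a - a'| = |dist x u - dist x v| := by rw [ha_def, ha'_def]
      _ ≤ dist u v := h1
      _ ≤ 3 * r := h2
  have hd2 : |b' - a| ≤ 3 * r := by
    have h1 := abs_dist_sub_le y x u
    calc |b' - a| = |dist y u - dist x u| := by rw [hb'_def, ha_def]
      _ ≤ dist y x := h1
      _ ≤ 3 * r := by rw [dist_comm y x]; exact hxy
  have hd3 : |b - a'| ≤ 3 * r := by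
    have h1 := abs_dist_sub_le y x v
    calc |b - a'| = |dist y v - dist x v| := by rw [hb_def, ha'_def]
      _ ≤ dist y x := h1
      _ ≤ 3 * r := by rw [dist_comm y x]; exact hxy
  -- the second-order cancellation via inner products
  have hPQ : |a ^ 2 - a' ^ 2 - (b' ^ 2 - b ^ 2)| ≤ 18 * r ^ 2 := by
    have e1 : a ^ 2 - a' ^ 2 - (b' ^ 2 - b ^ 2)
        = (inner ℝ ((x - y) + (x - y)) (v - u) : ℝ) := by
      rw [ha_def, ha'_def, hb_def, hb'_def, dist_eq_norm, dist_eq_norm, dist_eq_norm,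
        dist_eq_norm, sq_sub_sq_inner (x - u) (x - v), sq_sub_sq_inner (y - u) (y - v)]
      rw [show (x - u) - (x - v) = v - u by abel, show (y - u) - (y - v) = v - u by abel,
        ← inner_sub_left]
      congr 1
      abel
    rw [e1]
    calc |(inner ℝ ((x - y) + (x - y)) (v - u) : ℝ)|
        ≤ ‖(x - y) + (x - y)‖ * ‖v - u‖ := abs_real_inner_le_norm _ _
      _ ≤ (3 * r + 3 * r) * (3 * r) := by
          apply mul_le_mul _ _ (norm_nonneg _) (by positivity)
          · calc ‖(x - y) + (x - y)‖ ≤ ‖x - y‖ + ‖x - y‖ := norm_add_le _ _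
              _ ≤ 3 * r + 3 * r := by
                  rw [← dist_eq_norm]; linarith
          · rw [← dist_eq_norm]; exact hvu
      _ = 18 * r ^ 2 := by ring
  -- bound on |b'(b+b') - a(a+a')|
  have habs_a : |a| ≤ 2 * D := by rw [abs_of_pos ha0]; exact ha2
  have habs_a' : |a'| ≤ 2 * D := by rw [abs_of_pos ha'0]; exact ha'2
  have habs_b' : |b'| ≤ 2 * D := by rw [abs_of_pos hb'0]; exact hb'2
  have n1 : |b' * (b + b') - a * (a + a')| ≤ 24 * (D * r) := by
    have e : b' * (b + b') - a * (a + a')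
        = b' * (b - a') + a' * (b' - a) + (b' + a) * (b' - a) := by ring
    rw [e]
    calc |b' * (b - a') + a' * (b' - a) + (b' + a) * (b' - a)|
        ≤ |b' * (b - a')| + |a' * (b' - a)| + |(b' + a) * (b' - a)| := abs_add_three _ _ _
      _ = |b'| * |b - a'| + |a'| * |b' - a| + |b' + a| * |b' - a| := by
          rw [abs_mul, abs_mul, abs_mul]
      _ ≤ (2 * D) * (3 * r) + (2 * D) * (3 * r) + (4 * D) * (3 * r) := by
          have h4 : |b' + a| ≤ 4 * D := by
            rw [abs_of_pos (by linarith)]; linarith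
          gcongr <;> positivity
      _ = 24 * (D * r) := by ring
  have n2 : |a ^ 2 - a' ^ 2| ≤ 12 * (D * r) := by
    have e : a ^ 2 - a' ^ 2 = (a - a') * (a + a') := by ring
    rw [e, abs_mul]
    calc |a - a'| * |a + a'| ≤ (3 * r) * (4 * D) := by
          have h4 : |a + a'| ≤ 4 * D := by
            rw [abs_of_pos (by linarith)]; linarith
          gcongr <;> positivity
      _ = 12 * (D * r) := by ring
  -- key algebraic identity and bound on |ab - a'b'|
  have hnum : |a * b - a' * b'| ≤ 1728 * r ^ 2 := by
    have hring : (a * b - a' * b') * ((a + a') * (b + b'))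
        = (a ^ 2 - a' ^ 2) * (b' * (b + b') - a * (a + a'))
          + (a ^ 2 - a' ^ 2 - (b' ^ 2 - b ^ 2)) * (a * (a + a')) := by ring
    have hbig : |a * b - a' * b'| * ((a + a') * (b + b')) ≤ 432 * (D ^ 2 * r ^ 2) := by
      have hpos : 0 ≤ (a + a') * (b + b') := by positivity
      rw [← abs_of_nonneg hpos, ← abs_mul, hring]
      calc |(a ^ 2 - a' ^ 2) * (b' * (b + b') - a * (a + a'))
            + (a ^ 2 - a' ^ 2 - (b' ^ 2 - b ^ 2)) * (a * (a + a'))|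
          ≤ |a ^ 2 - a' ^ 2| * |b' * (b + b') - a * (a + a')|
            + |a ^ 2 - a' ^ 2 - (b' ^ 2 - b ^ 2)| * |a * (a + a')| := by
            calc _ ≤ |(a ^ 2 - a' ^ 2) * (b' * (b + b') - a * (a + a'))|
                + |(a ^ 2 - a' ^ 2 - (b' ^ 2 - b ^ 2)) * (a * (a + a'))| := abs_add_le _ _
              _ = _ := by rw [abs_mul, abs_mul]
        _ ≤ (12 * (D * r)) * (24 * (D * r)) + (18 * r ^ 2) * (8 * D ^ 2) := by
            have haa' : |a * (a + a')| ≤ 8 * D ^ 2 := by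
              rw [abs_of_pos (by positivity)]
              nlinarith
            gcongr <;> positivity
        _ = 432 * (D ^ 2 * r ^ 2) := by ring
    have hden : D ^ 2 / 4 ≤ (a + a') * (b + b') := by nlinarith
    have h3 : |a * b - a' * b'| * (D ^ 2 / 4) ≤ 432 * (D ^ 2 * r ^ 2) :=
      le_trans (mul_le_mul_of_nonneg_left hden (abs_nonneg _)) hbig
    nlinarith [h3, mul_pos hD hD, abs_nonneg (a * b - a' * b')]
  -- ratio bounds
  set t := a * b / (a' * b') with ht_def
  have hab' : 0 < a' * b' := mul_pos ha'0 hb'0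
  have habm : a * b ≤ 4 * D ^ 2 := by nlinarith
  have hab'm : a' * b' ≤ 4 * D ^ 2 := by nlinarith
  have habl : D ^ 2 / 16 ≤ a * b := by nlinarith
  have hab'l : D ^ 2 / 16 ≤ a' * b' := by nlinarith
  have ht1 : 1 / 64 ≤ t := by
    rw [ht_def, le_div_iff₀ hab']
    nlinarith
  have ht2 : t ≤ 64 := by
    rw [ht_def, div_le_iff₀ hab']
    nlinarith
  have htd : |t - 1| ≤ 27648 * r ^ 2 / D ^ 2 := by
    have e : t - 1 = (a * b - a' * b') / (a' * b') := by
      rw [ht_def]; field_simp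
    rw [e, abs_div, abs_of_pos hab', div_le_div_iff₀ hab' (by positivity : (0:ℝ) < D ^ 2)]
    have h1 : |a * b - a' * b'| * D ^ 2 ≤ 1728 * r ^ 2 * D ^ 2 := by
      nlinarith [sq_nonneg D]
    have h2 : 1728 * r ^ 2 * D ^ 2 ≤ 27648 * r ^ 2 * (a' * b') := by
      have := mul_le_mul_of_nonneg_left hab'l (show (0:ℝ) ≤ 27648 * r ^ 2 by positivity)
      linarith
    linarith
  -- put it together via the mean value estimate on t ↦ t^p
  have hp : 0 < β ^ 2 := by positivity
  have hfinal := rpow_est hp ht1 ht2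
  have hgoal_eq : (a ^ (β ^ 2) * b ^ (β ^ 2)) / (a' ^ (β ^ 2) * b' ^ (β ^ 2))
      = t ^ (β ^ 2) := by
    rw [ht_def, Real.div_rpow (by positivity) (by positivity),
      Real.mul_rpow ha0.le hb0.le, Real.mul_rpow ha'0.le hb'0.le]
  rw [hgoal_eq]
  calc |t ^ (β ^ 2) - 1| ≤ β ^ 2 * (64 : ℝ) ^ |β ^ 2 - 1| * |t - 1| := hfinal
    _ ≤ β ^ 2 * (64 : ℝ) ^ |β ^ 2 - 1| * (27648 * r ^ 2 / D ^ 2) := by gcongr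
    _ = 27648 * (64 : ℝ) ^ |β ^ 2 - 1| * β ^ 2 * r ^ 2 / D ^ 2 := by ring
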